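/- arXiv:2207.12682 — 2 statements merged into one kernel-verified Lean document; each statement's English description precedes it below -/
import Mathlib

section
/- For every real $r$, every $k > 0$, and every $p \ge 2$, let $j_{k,p}(r) = \int_0^r s\,|T_k(s)|^{p-2}\, ds$, where $T_k(s) = \max(-k, \min(k, s))$ is the truncation at level $k$. Then $r^2 |T_k(r)|^{p-2} \le p\, j_{k,p}(r)$. -/
lemma trunc_neg (k x : ℝ) (hk : 0 ≤ k) :
    max (-k) (min k (-x)) = -max (-k) (min k x) := by
  have h1 : -(max (-k) (min k x)) = min k (-(min k x)) := by
    rw [← min_neg_neg, neg_neg]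
  have h2 : -(min k x) = max (-k) (-x) := by rw [← max_neg_neg]
  rw [h1, h2, max_min_distrib_left, max_eq_right (by linarith : -k ≤ k), min_comm]

lemma main_nonneg (r k p : ℝ) (hk : 0 < k) (hp : 2 ≤ p) (hr : 0 ≤ r) :
    r ^ 2 * |max (-k) (min k r)| ^ (p - 2)
      ≤ p * ∫ s in (0:ℝ)..r, s * |max (-k) (min k s)| ^ (p - 2) := by
  have hp0 : (0:ℝ) < p := by linarith
  have hcont : Continuous fun s : ℝ => s * |max (-k) (min k s)| ^ (p - 2) :=
    continuous_id.mul
      (((continuous_const.max (continuous_const.min continuous_id)).abs).rpow_const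
        (fun x => Or.inr (by linarith)))
  have hEqk : ∀ b : ℝ, 0 ≤ b → b ≤ k →
      Set.EqOn (fun s : ℝ => s * |max (-k) (min k s)| ^ (p - 2))
        (fun s : ℝ => s ^ (p - 1)) (Set.uIcc 0 b) := by
    intro b hb hbk s hs
    rw [Set.uIcc_of_le hb] at hs
    obtain ⟨h0, h1⟩ := hs
    have hsk : s ≤ k := le_trans h1 hbk
    simp only
    rw [min_eq_right hsk, max_eq_right (by linarith), abs_of_nonneg h0]
    rcases eq_or_lt_of_le h0 with h | h
    · rw [← h, Real.zero_rpow (by intro hc; linarith : p - 1 ≠ 0), zero_mul]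
    · calc s * s ^ (p - 2) = s ^ (1:ℝ) * s ^ (p - 2) := by rw [Real.rpow_one]
        _ = s ^ (1 + (p - 2)) := (Real.rpow_add h 1 (p - 2)).symm
        _ = s ^ (p - 1) := by ring_nf
  rcases le_or_gt r k with hrk | hrk
  · rw [intervalIntegral.integral_congr (hEqk r hr hrk),
      integral_rpow (Or.inl (by linarith : (-1:ℝ) < p - 1))]
    have h1 : p - 1 + 1 = p := by ring
    rw [h1, Real.zero_rpow (by positivity), sub_zero, mul_div_cancel₀ _ (ne_of_gt hp0)]
    rcases eq_or_lt_of_le hr with h | h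
    · rw [← h]; simp [Real.zero_rpow (by linarith : p ≠ 0)]
    · have habs : |max (-k) (min k r)| = r := by
        rw [min_eq_right hrk, max_eq_right (by linarith), abs_of_nonneg hr]
      rw [habs]
      have : r ^ 2 * r ^ (p - 2) = r ^ p := by
        rw [← Real.rpow_natCast r 2, ← Real.rpow_add h]; norm_num
      rw [this]
  · have hi1 : IntervalIntegrable (fun s : ℝ => s * |max (-k) (min k s)| ^ (p - 2))
        MeasureTheory.volume 0 k := hcont.intervalIntegrable _ _
    have hi2 : IntervalIntegrable (fun s : ℝ => s * |max (-k) (min k s)| ^ (p - 2))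
        MeasureTheory.volume k r := hcont.intervalIntegrable _ _
    rw [← intervalIntegral.integral_add_adjacent_intervals hi1 hi2]
    have hI1 : (∫ s in (0:ℝ)..k, s * |max (-k) (min k s)| ^ (p - 2)) = k ^ p / p := by
      rw [intervalIntegral.integral_congr (hEqk k hk.le le_rfl),
        integral_rpow (Or.inl (by linarith : (-1:ℝ) < p - 1))]
      have h1 : p - 1 + 1 = p := by ring
      rw [h1, Real.zero_rpow (by positivity), sub_zero]
    have hI2 : (∫ s in k..r, s * |max (-k) (min k s)| ^ (p - 2))
        = (r ^ 2 - k ^ 2) / 2 * k ^ (p - 2) := by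
      have hEq2 : Set.EqOn (fun s : ℝ => s * |max (-k) (min k s)| ^ (p - 2))
          (fun s : ℝ => s * k ^ (p - 2)) (Set.uIcc k r) := by
        intro s hs
        rw [Set.uIcc_of_le hrk.le] at hs
        obtain ⟨h0, h1⟩ := hs
        simp only
        rw [min_eq_left h0, max_eq_right (by linarith), abs_of_nonneg hk.le]
      rw [intervalIntegral.integral_congr hEq2, intervalIntegral.integral_mul_const,
        integral_id]
    rw [hI1, hI2]
    have habs : |max (-k) (min k r)| = k := by
      rw [min_eq_left hrk.le, max_eq_right (by linarith), abs_of_nonneg hk.le]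
    rw [habs]
    have hkp : k ^ p = k ^ 2 * k ^ (p - 2) := by
      rw [← Real.rpow_natCast k 2, ← Real.rpow_add hk]; norm_num
    have hc : (0:ℝ) < k ^ (p - 2) := Real.rpow_pos_of_pos hk _
    have hrk2 : k ^ 2 ≤ r ^ 2 := by nlinarith
    rw [mul_add, mul_div_cancel₀ _ (ne_of_gt hp0), hkp]
    have key : 0 ≤ (p - 2) * ((r ^ 2 - k ^ 2) * k ^ (p - 2)) :=
      mul_nonneg (by linarith) (mul_nonneg (sub_nonneg.mpr hrk2) hc.le)
    nlinarith [key]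

/-- For `r ∈ ℝ`, `k > 0`, `p ≥ 2`, with `T_k` the truncation at level `k`
and `j_{k,p}(r) = ∫₀ʳ s |T_k(s)|^{p-2} ds`, one has `r² |T_k(r)|^{p-2} ≤ p · j_{k,p}(r)`. -/
theorem truncation_primitive_bound (r k p : ℝ) (hk : 0 < k) (hp : 2 ≤ p) :
    r ^ 2 * |max (-k) (min k r)| ^ (p - 2)
      ≤ p * ∫ s in (0:ℝ)..r, s * |max (-k) (min k s)| ^ (p - 2) := by
  rcases le_or_gt 0 r with hr | hr
  · exact main_nonneg r k p hk hp hr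
  · have hodd : ∀ x : ℝ, (-x) * |max (-k) (min k (-x))| ^ (p - 2)
        = -(x * |max (-k) (min k x)| ^ (p - 2)) := by
      intro x
      rw [trunc_neg k x hk.le, abs_neg]; ring
    have hint : (∫ s in (0:ℝ)..r, s * |max (-k) (min k s)| ^ (p - 2))
        = ∫ s in (0:ℝ)..(-r), s * |max (-k) (min k s)| ^ (p - 2) := by
      have h1 : (∫ s in (0:ℝ)..(-r), (-s) * |max (-k) (min k (-s))| ^ (p - 2))
          = ∫ s in r..(0:ℝ), s * |max (-k) (min k s)| ^ (p - 2) := by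
        rw [intervalIntegral.integral_comp_neg
          (fun s => s * |max (-k) (min k s)| ^ (p - 2))]
        norm_num
      simp only [hodd] at h1
      rw [intervalIntegral.integral_neg, intervalIntegral.integral_symm 0 r] at h1
      linarith [h1]
    have habs : |max (-k) (min k r)| = |max (-k) (min k (-(-r)))| := by norm_num
    rw [hint, habs, trunc_neg k (-r) hk.le, abs_neg, show r ^ 2 = (-r) ^ 2 by ring]
    exact main_nonneg (-r) k p hk hp (by linarith)
end

section
/- Let $[X,\mathcal{B},m,\nu]$ be a reversible random walk space with $\nu(X) < \infty$ satisfying the Poincaré inequality $\lambda \|f\|^2_{L^2(X,\nu)} \le \mathcal{H}_m(f)$ for all $f \in L^2(X,\nu)$ with $\int_X f\,d\nu = 0$, where $\lambda > 0$. Suppose $v \in L_0^2(X,\nu)$ and $\phi \in L_0^2(X,\nu)\cap L^1(X,\nu)$ satisfy $\Delta_m \phi = v$. Then $\|\phi\|^2_{L^2(X,\nu)} \le \tfrac{1}{2\lambda} \|v\|^2_{H^{-1}_m}$ and $\|v\|_{L^2(X,\nu)} \le \sqrt{2/\lambda}\, \|v\|_{H^{-1}_m}$, where $\|v\|^2_{H^{-1}_m}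 := \tfrac{1}{2}\int_{X\times X} (\phi(y)-\phi(x))^2\, dm_x(y)\, d\nu(x)$. -/
open MeasureTheory ProbabilityTheory

/-- In a reversible random walk space with finite measure satisfying a
Poincaré inequality with constant `lam > 0`, if `v ∈ L²₀(X,ν)` and
`φ ∈ L²₀(X,ν) ∩ L¹(X,ν)` satisfy `Δ_m φ = v`, then
`‖φ‖₂² ≤ (1/(2 lam)) ‖v‖²_{H⁻¹}` and `‖v‖₂ ≤ √(2/lam) ‖v‖_{H⁻¹}`, where
`‖v‖²_{H⁻¹} = ½ ∫∫ (φ(y)-φ(x))² dm_x(y) dν(x)`. -/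
theorem H_minus_one_estimates
    {X : Type*} [MeasurableSpace X] (m : Kernel X X) [IsMarkovKernel m]
    (ν : Measure X) [IsFiniteMeasure ν]
    (hinv : ν.bind (fun x => m x) = ν)
    (hrev : (ν.compProd m).map Prod.swap = ν.compProd m)
    (lam : ℝ) (hlam : 0 < lam)
    (hP : ∀ f : X → ℝ, MemLp f 2 ν → (∫ x, f x ∂ν) = 0 →
      lam * ∫ x, (f x)^2 ∂ν ≤ (1/4) * ∫ p, (f p.2 - f p.1)^2 ∂(ν.compProd m))
    (v φ : X → ℝ)
    (hv : MemLp v 2 ν) (hv0 : (∫ x, v x ∂ν) = 0)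
    (hφ1 : Integrable φ ν) (hφ2 : MemLp φ 2 ν) (hφ0 : (∫ x, φ x ∂ν) = 0)
    (heq : ∀ x, (∫ y, (φ y - φ x) ∂(m x)) = v x) :
    (∫ x, (φ x)^2 ∂ν) ≤ (1/(2*lam)) * ((1/2) * ∫ p, (φ p.2 - φ p.1)^2 ∂(ν.compProd m)) ∧
      Real.sqrt (∫ x, (v x)^2 ∂ν)
        ≤ Real.sqrt (2/lam) *
            Real.sqrt ((1/2) * ∫ p, (φ p.2 - φ p.1)^2 ∂(ν.compProd m)) := by
  classical
  set μ : Measure (X × X) := ν.compProd m with hμdef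
  -- measurable representative of φ
  obtain ⟨ψ, hψsm, hφψ⟩ := hφ2.1
  have hψ : Measurable ψ := hψsm.measurable
  have hψ2 : MemLp ψ 2 ν := hφ2.ae_eq hφψ
  have hψsq : Integrable (fun x => ψ x ^ 2) ν := hψ2.integrable_sq
  -- a measurable null set containing {φ ≠ ψ}
  obtain ⟨N, hNsub, hNm, hN0⟩ :=
    exists_measurable_superset_of_null (μ := ν) (s := {x | φ x ≠ ψ x}) (ae_iff.mp hφψ)
  have hout : ∀ x, x ∉ N → φ x = ψ x := by
    intro x hx
    by_contra h
    exact hx (hNsub h)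
  -- a.e. x, m x N = 0
  have hmN : ∀ᵐ x ∂ν, m x N = 0 := by
    have h1 : ∫⁻ x, m x N ∂ν = 0 := by
      rw [← Measure.bind_apply hNm (Kernel.measurable m).aemeasurable, hinv]
      exact hN0
    exact (lintegral_eq_zero_iff (Kernel.measurable_coe m hNm)).mp h1
  -- snd marginal of μ is ν
  have hsnd : μ.map Prod.snd = ν := by
    ext s hs
    rw [Measure.map_apply measurable_snd hs, hμdef,
      Measure.compProd_apply (measurable_snd hs)]
    have : ∀ x : X, (Prod.mk x ⁻¹' (Prod.snd ⁻¹' s)) = s := fun x => rfl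
    simp_rw [this]
    rw [← Measure.bind_apply hs (Kernel.measurable m).aemeasurable, hinv]
  have hfst : μ.map Prod.fst = ν := by
    rw [show μ.map Prod.fst = μ.fst from rfl, hμdef, Measure.fst_compProd]
  -- a.e. p ∂μ, both coordinates outside N
  have haeN : ∀ᵐ p ∂μ, p.1 ∉ N ∧ p.2 ∉ N := by
    have h1 : μ (Prod.fst ⁻¹' N) = 0 := by
      rw [← Measure.map_apply measurable_fst hNm, hfst]; exact hN0
    have h2 : μ (Prod.snd ⁻¹' N) = 0 := by
      rw [← Measure.map_apply measurable_snd hNm, hsnd]; exact hN0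
    filter_upwards [measure_eq_zero_iff_ae_notMem.mp h1, measure_eq_zero_iff_ae_notMem.mp h2] with p hp1 hp2
    exact ⟨hp1, hp2⟩
  have hFae : (fun p : X × X => (φ p.2 - φ p.1) ^ 2) =ᵐ[μ] fun p => (ψ p.2 - ψ p.1) ^ 2 := by
    filter_upwards [haeN] with p hp
    rw [hout _ hp.1, hout _ hp.2]
  -- integrability on μ
  have hψsq_meas : Measurable fun x => ψ x ^ 2 := hψ.pow_const 2
  have hG2 : Integrable (fun p : X × X => ψ p.2 ^ 2) μ := by
    have h' : Integrable (fun x => ψ x ^ 2) (μ.map Prod.snd) := by rwa [hsnd]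
    exact (integrable_map_measure hψsq_meas.aestronglyMeasurable
      measurable_snd.aemeasurable).mp h'
  have hG1 : Integrable (fun p : X × X => ψ p.1 ^ 2) μ := by
    have h' : Integrable (fun x => ψ x ^ 2) (μ.map Prod.fst) := by rwa [hfst]
    exact (integrable_map_measure hψsq_meas.aestronglyMeasurable
      measurable_fst.aemeasurable).mp h'
  have hGint : Integrable (fun p : X × X => 2 * ψ p.2 ^ 2 + 2 * ψ p.1 ^ 2) μ :=
    (hG2.const_mul 2).add (hG1.const_mul 2)
  have hFψmeas : Measurable fun p : X × X => (ψ p.2 - ψ p.1) ^ 2 :=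
    ((hψ.comp measurable_snd).sub (hψ.comp measurable_fst)).pow_const 2
  have hFψint : Integrable (fun p : X × X => (ψ p.2 - ψ p.1) ^ 2) μ := by
    refine hGint.mono' hFψmeas.aestronglyMeasurable (Filter.Eventually.of_forall fun p => ?_)
    rw [Real.norm_of_nonneg (sq_nonneg _)]
    nlinarith [sq_nonneg (ψ p.2 + ψ p.1)]
  -- integrals of the marginal squares
  have hI2 : ∫ p, ψ p.2 ^ 2 ∂μ = ∫ x, ψ x ^ 2 ∂ν := by
    rw [← hsnd, integral_map measurable_snd.aemeasurable]
    rw [hsnd]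
    exact hψsq_meas.aestronglyMeasurable
  have hI1 : ∫ p, ψ p.1 ^ 2 ∂μ = ∫ x, ψ x ^ 2 ∂ν := by
    rw [← hfst, integral_map measurable_fst.aemeasurable]
    rw [hfst]
    exact hψsq_meas.aestronglyMeasurable
  -- (C): energy ≤ 4 ∫ ψ²
  have hC : ∫ p, (ψ p.2 - ψ p.1) ^ 2 ∂μ ≤ 4 * ∫ x, ψ x ^ 2 ∂ν := by
    have h1 : ∫ p, (ψ p.2 - ψ p.1) ^ 2 ∂μ ≤ ∫ p, (2 * ψ p.2 ^ 2 + 2 * ψ p.1 ^ 2) ∂μ := by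
      refine integral_mono hFψint hGint fun p => ?_
      nlinarith [sq_nonneg (ψ p.2 + ψ p.1)]
    have h2 : ∫ p, (2 * ψ p.2 ^ 2 + 2 * ψ p.1 ^ 2) ∂μ
        = 2 * (∫ p, ψ p.2 ^ 2 ∂μ) + 2 * (∫ p, ψ p.1 ^ 2 ∂μ) := by
      rw [integral_add (hG2.const_mul 2) (hG1.const_mul 2), integral_const_mul,
        integral_const_mul]
    rw [h2, hI1, hI2] at h1
    linarith
  -- a.e. x, ψ ∈ L²(m x)
  have hmem : ∀ᵐ x ∂ν, MemLp ψ 2 (m x) := by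
    have hmeas0 : Measurable fun y => ENNReal.ofReal (ψ y ^ 2) := hψsq_meas.ennreal_ofReal
    have hmeasx : Measurable fun x => ∫⁻ y, ENNReal.ofReal (ψ y ^ 2) ∂m x :=
      Measurable.lintegral_kernel_prod_right' (hmeas0.comp measurable_snd)
    have htot : ∫⁻ x, (∫⁻ y, ENNReal.ofReal (ψ y ^ 2) ∂m x) ∂ν
        = ∫⁻ y, ENNReal.ofReal (ψ y ^ 2) ∂ν := by
      conv_rhs => rw [← hinv]
      rw [Measure.lintegral_bind (Kernel.measurable m).aemeasurable hmeas0.aemeasurable]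
    have hfin : ∫⁻ x, (∫⁻ y, ENNReal.ofReal (ψ y ^ 2) ∂m x) ∂ν ≠ ⊤ := by
      rw [htot]
      exact hψsq.lintegral_lt_top.ne
    filter_upwards [ae_lt_top hmeasx hfin] with x hx
    refine (memLp_two_iff_integrable_sq hψ.aestronglyMeasurable).mpr ?_
    exact ⟨hψsq_meas.aestronglyMeasurable,
      (hasFiniteIntegral_iff_ofReal (Filter.Eventually.of_forall fun y => sq_nonneg _)).mpr hx⟩
  -- a.e. x, v x = ∫ (ψ y - ψ x) dm x  and Jensen
  have hJ : ∀ᵐ x ∂ν, v x ^ 2 ≤ ∫ y, (ψ y - ψ x) ^ 2 ∂m x := by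
    filter_upwards [hmN, hφψ, hmem] with x hmx hφx hx
    have haex : ∀ᵐ y ∂m x, y ∉ N := measure_eq_zero_iff_ae_notMem.mp hmx
    have hveq : v x = ∫ y, (ψ y - ψ x) ∂m x := by
      rw [← heq x]
      refine integral_congr_ae ?_
      filter_upwards [haex] with y hy
      rw [hout _ hy, hφx]
    have hm2 : MemLp (fun y => ψ y - ψ x) 2 (m x) := hx.sub (memLp_const (ψ x))
    have h0 := variance_nonneg (fun y => ψ y - ψ x) (m x)
    rw [variance_eq_sub hm2] at h0
    simp only [Pi.pow_apply] at h0
    rw [hveq]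
    linarith
  -- integrate Jensen
  have hpair := (Measure.integrable_compProd_iff hFψmeas.aestronglyMeasurable).mp hFψint
  have hJint : Integrable (fun x => ∫ y, (ψ y - ψ x) ^ 2 ∂m x) ν := by
    refine hpair.2.congr (Filter.Eventually.of_forall fun x => ?_)
    show (∫ y, ‖(ψ y - ψ x) ^ 2‖ ∂m x) = ∫ y, (ψ y - ψ x) ^ 2 ∂m x
    exact integral_congr_ae (Filter.Eventually.of_forall fun y => Real.norm_of_nonneg (sq_nonneg _))
  have hIv_le : ∫ x, v x ^ 2 ∂ν ≤ ∫ x, (∫ y, (ψ y - ψ x) ^ 2 ∂m x) ∂ν :=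
    integral_mono_ae hv.integrable_sq hJint hJ
  have hE' : ∫ p, (ψ p.2 - ψ p.1) ^ 2 ∂μ = ∫ x, (∫ y, (ψ y - ψ x) ^ 2 ∂m x) ∂ν :=
    Measure.integral_compProd hFψint
  -- relate integrals of φ and ψ
  have hEφψ : ∫ p, (φ p.2 - φ p.1) ^ 2 ∂μ = ∫ p, (ψ p.2 - ψ p.1) ^ 2 ∂μ :=
    integral_congr_ae hFae
  have hIφψ : ∫ x, φ x ^ 2 ∂ν = ∫ x, ψ x ^ 2 ∂ν := by
    refine integral_congr_ae ?_
    filter_upwards [hφψ] with x hx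
    rw [hx]
  -- Poincaré for φ
  have hA := hP φ hφ2 hφ0
  have hIvE : ∫ x, v x ^ 2 ∂ν ≤ ∫ p, (φ p.2 - φ p.1) ^ 2 ∂μ := by
    rw [hEφψ, hE']
    exact hIv_le
  have hCE : ∫ p, (φ p.2 - φ p.1) ^ 2 ∂μ ≤ 4 * ∫ x, φ x ^ 2 ∂ν := by
    rw [hEφψ, hIφψ]
    exact hC
  have hIv_nonneg : 0 ≤ ∫ x, v x ^ 2 ∂ν := integral_nonneg fun x => sq_nonneg _
  have key : ∀ E Iφ Iv : ℝ, Iv ≤ E → E ≤ 4 * Iφ → lam * Iφ ≤ 1/4 * E → 0 ≤ Iv →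
      (Iφ ≤ 1/(2*lam) * (1/2 * E) ∧
        Real.sqrt Iv ≤ Real.sqrt (2/lam) * Real.sqrt (1/2 * E)) := by
    intro E Iφ Iv h1 h2 h3 h4
    constructor
    · have hE4 : 1/(2*lam) * (1/2 * E) = E / (4*lam) := by
        ring
      rw [hE4, le_div_iff₀ (by positivity)]
      linarith
    · rw [← Real.sqrt_mul (by positivity : (0:ℝ) ≤ 2/lam)]
      apply Real.sqrt_le_sqrt
      have hE2 : 2/lam * (1/2 * E) = E / lam := by
        field_simp
      rw [hE2, le_div_iff₀ hlam]
      nlinarith [mul_le_mul_of_nonneg_left h1 hlam.le, mul_le_mul_of_nonneg_left h2 hlam.le]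
  exact key _ _ _ hIvE hCE hA hIv_nonneg
end
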